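/- In Penney's game with patterns of length 3, the pattern 110 beats the pattern 100: μ{ω : T_{110}(ω) < T_{100}(ω)} > 1/2. -/

import Mathlib

open MeasureTheory

/-- The first time the length-3 pattern `p` appears in the bit sequence `ω`
(as `ω n, ω (n+1), ω (n+2)`), or `∞` if it never appears. -/
noncomputable def hitTime (p : Bool × Bool × Bool) (ω : ℕ → Bool) : ℕ∞ :=
  sInf ((fun n : ℕ => (n : ℕ∞)) '' {n : ℕ | (ω n, ω (n + 1), ω (n + 2)) = p})

/-- `μ` is the fair-coin measure on `ℕ → Bool`, i.e. the product over `ℕ` of the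
uniform probability measure on `Bool`: it is characterized by giving each cylinder
set prescribing finitely many coordinates its uniform probability `(1/2)^#coords`. -/
def IsFairCoinMeasure (μ : Measure (ℕ → Bool)) : Prop :=
  ∀ (s : Finset ℕ) (v : ℕ → Bool),
    μ {ω : ℕ → Bool | ∀ i ∈ s, ω i = v i} = (1 / 2 : ENNReal) ^ s.card

namespace PenneyAux

/-- The cylinder set of sequences starting with the prefix `l`. -/
def cyl (l : List Bool) : Set (ℕ → Bool) :=
  {ω : ℕ → Bool | ∀ i ∈ Finset.range l.length, ω i = l.getD i false}

lemma measurableSet_cyl (l : List Bool) : MeasurableSet (cyl l) := by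
  have h : cyl l = ⋂ i ∈ Finset.range l.length,
      (fun ω : ℕ → Bool => ω i) ⁻¹' {l.getD i false} := by
    ext ω; simp [cyl]
  rw [h]
  exact Finset.measurableSet_biInter _ fun i _ =>
    measurable_pi_apply i (measurableSet_singleton _)

lemma cyl_measure {μ : Measure (ℕ → Bool)} (hμ : IsFairCoinMeasure μ) (l : List Bool) :
    μ (cyl l) = (1/2 : ENNReal) ^ l.length := by
  have := hμ (Finset.range l.length) (fun i => l.getD i false)
  rwa [Finset.card_range] at this

lemma cyl_disjoint {l1 l2 : List Bool} (i : ℕ) (h1 : i < l1.length)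
    (h2 : i < l2.length) (hne : l1.getD i false ≠ l2.getD i false) :
    Disjoint (cyl l1) (cyl l2) :=
  Set.disjoint_left.mpr fun _ m1 m2 =>
    hne ((m1 i (Finset.mem_range.mpr h1)).symm.trans (m2 i (Finset.mem_range.mpr h2)))

lemma hitTime_le {p : Bool × Bool × Bool} {ω : ℕ → Bool} {N : ℕ}
    (h : (ω N, ω (N+1), ω (N+2)) = p) : hitTime p ω ≤ N :=
  sInf_le ⟨N, h, rfl⟩

lemma lt_hitTime {p : Bool × Bool × Bool} {ω : ℕ → Bool} {N : ℕ}
    (h : ∀ k ≤ N, (ω k, ω (k+1), ω (k+2)) ≠ p) : (N : ℕ∞) < hitTime p ω := by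
  have h1 : ((N+1 : ℕ) : ℕ∞) ≤ hitTime p ω := by
    apply le_sInf
    rintro b ⟨k, hk, rfl⟩
    have : N < k := by
      by_contra hle
      exact h k (by omega) hk
    show ((N+1:ℕ) : ℕ∞) ≤ (k : ℕ∞)
    exact_mod_cast this
  calc (N : ℕ∞) < ((N+1 : ℕ) : ℕ∞) := by exact_mod_cast Nat.lt_succ_self N
    _ ≤ _ := h1

/-- Key combinatorial lemma: if `ω n = ω (n+1) = true`, there is no occurrence of
`100` ending strictly before position `n`, and some coordinate after `n+1` is
`false`, then `110` appears strictly before `100`. -/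
lemma main_comb (ω : ℕ → Bool) (n : ℕ)
    (h100pre : ∀ k, k + 3 ≤ n → ¬(ω k = true ∧ ω (k+1) = false ∧ ω (k+2) = false))
    (htt0 : ω n = true) (htt1 : ω (n+1) = true)
    (hex : ∃ j, ω (n + 2 + j) = false) :
    hitTime (true, true, false) ω < hitTime (true, false, false) ω := by
  obtain ⟨j0, hj0f, hj0min⟩ : ∃ j0, ω (n+2+j0) = false ∧ ∀ i, i < j0 → ω (n+2+i) = true := by
    refine ⟨Nat.find hex, Nat.find_spec hex, fun i hi => ?_⟩
    have := Nat.find_min hex hi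
    simpa using this
  have hN2 : ω (n + j0 + 2) = false := by
    have e : n + j0 + 2 = n + 2 + j0 := by omega
    rw [e]; exact hj0f
  have hN1 : ω (n + j0 + 1) = true := by
    rcases j0 with _ | j'
    · simpa using htt1
    · have e : n + (j'+1) + 1 = n + 2 + j' := by omega
      rw [e]; exact hj0min j' (by omega)
  have hN0 : ω (n + j0) = true := by
    rcases j0 with _ | _ | j'
    · simpa using htt0
    · simpa using htt1
    · have e : n + (j'+2) = n + 2 + j' := by omega
      rw [e]; exact hj0min j' (by omega)
  have h110 : hitTime (true, true, false) ω ≤ ((n + j0) : ℕ∞) :=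
    hitTime_le (by rw [hN0, hN1, hN2])
  have h100 : ((n + j0) : ℕ∞) < hitTime (true, false, false) ω := by
    apply lt_hitTime
    intro k hk hocc
    replace hk : k ≤ n + j0 := hk
    have h1 : ω k = true := congrArg Prod.fst hocc
    have h2 : ω (k+1) = false := congrArg (fun x => x.2.1) hocc
    have h3 : ω (k+2) = false := congrArg (fun x => x.2.2) hocc
    have hk1 : k + 1 < n + 2 := by
      by_contra hge
      obtain ⟨i, hi1, hi2⟩ : ∃ i, k + 1 = n + 2 + i ∧ i < j0 := ⟨k + 1 - (n+2), by omega, by omega⟩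
      rw [hi1, hj0min i hi2] at h2
      exact Bool.noConfusion h2
    rcases (by omega : k + 3 ≤ n ∨ k + 1 = n ∨ k + 2 = n ∨ k + 1 = n + 1) with h | h | h | h
    · exact h100pre k h ⟨h1, h2, h3⟩
    · rw [h, htt0] at h2; exact Bool.noConfusion h2
    · rw [h, htt0] at h3; exact Bool.noConfusion h3
    · rw [h, htt1] at h2; exact Bool.noConfusion h2
  exact lt_of_le_of_lt h110 h100

end PenneyAux

open PenneyAux in
/-- In Penney's game with patterns of length 3, the pattern `110`
beats the pattern `100`: `μ {ω | T_110 ω < T_100 ω} > 1/2`. -/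
theorem penney_110_beats_100 (μ : Measure (ℕ → Bool)) (hμ : IsFairCoinMeasure μ) :
    μ {ω : ℕ → Bool | hitTime (true, true, false) ω < hitTime (true, false, false) ω}
      > 1 / 2 := by
  classical
  -- the null set of sequences that are eventually all `true` from coordinate 5 on
  set Bad : Set (ℕ → Bool) := {ω | ∀ m, 5 ≤ m → ω m = true} with hBadDef
  have hbad : μ Bad = 0 := by
    by_contra h
    obtain ⟨k, hk⟩ := ENNReal.exists_inv_two_pow_lt h
    have hm := hμ (Finset.Icc 5 (5+k)) (fun _ => true)
    have hcard : (Finset.Icc 5 (5+k)).card = k + 1 := by rw [Nat.card_Icc]; omega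
    rw [hcard] at hm
    have hsub : Bad ⊆ {ω : ℕ → Bool | ∀ i ∈ Finset.Icc 5 (5+k), ω i = (fun _ => true) i} := by
      intro ω hω i hi
      rw [Finset.mem_Icc] at hi
      exact hω i hi.1
    have hle : μ Bad ≤ (1/2 : ENNReal)^(k+1) := hm ▸ measure_mono hsub
    rw [one_div] at hle
    have h2 : μ Bad ≤ (2⁻¹ : ENNReal) ^ k :=
      hle.trans (pow_le_pow_of_le_one zero_le (ENNReal.inv_le_one.mpr one_le_two) (by omega))
    exact absurd (hk.trans_le h2) (lt_irrefl _)
  -- the six cylinders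
  set c0 : Set (ℕ → Bool) := cyl [true, true] with hc0
  set c1 : Set (ℕ → Bool) := cyl [false, true, true] with hc1
  set c2 : Set (ℕ → Bool) := cyl [false, false, true, true] with hc2
  set c3 : Set (ℕ → Bool) := cyl [true, false, true, true] with hc3
  set c4 : Set (ℕ → Bool) := cyl [false, false, false, true, true] with hc4
  set c5 : Set (ℕ → Bool) := cyl [false, true, false, true, true] with hc5
  -- pairwise disjointness
  have d01 : Disjoint c0 c1 := cyl_disjoint 0 (by decide) (by decide) (by decide)
  have d02 : Disjoint c0 c2 := cyl_disjoint 0 (by decide) (by decide) (by decide)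
  have d03 : Disjoint c0 c3 := cyl_disjoint 1 (by decide) (by decide) (by decide)
  have d04 : Disjoint c0 c4 := cyl_disjoint 0 (by decide) (by decide) (by decide)
  have d05 : Disjoint c0 c5 := cyl_disjoint 0 (by decide) (by decide) (by decide)
  have d12 : Disjoint c1 c2 := cyl_disjoint 1 (by decide) (by decide) (by decide)
  have d13 : Disjoint c1 c3 := cyl_disjoint 0 (by decide) (by decide) (by decide)
  have d14 : Disjoint c1 c4 := cyl_disjoint 1 (by decide) (by decide) (by decide)
  have d15 : Disjoint c1 c5 := cyl_disjoint 2 (by decide) (by decide) (by decide)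
  have d23 : Disjoint c2 c3 := cyl_disjoint 0 (by decide) (by decide) (by decide)
  have d24 : Disjoint c2 c4 := cyl_disjoint 2 (by decide) (by decide) (by decide)
  have d25 : Disjoint c2 c5 := cyl_disjoint 1 (by decide) (by decide) (by decide)
  have d34 : Disjoint c3 c4 := cyl_disjoint 0 (by decide) (by decide) (by decide)
  have d35 : Disjoint c3 c5 := cyl_disjoint 1 (by decide) (by decide) (by decide)
  have d45 : Disjoint c4 c5 := cyl_disjoint 1 (by decide) (by decide) (by decide)
  set G : Set (ℕ → Bool) := c0 ∪ c1 ∪ c2 ∪ c3 ∪ c4 ∪ c5 with hGdef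
  -- measure of G
  have hG : μ G = (1/2 : ENNReal)^2 + (1/2)^3 + (1/2)^4 + (1/2)^4 + (1/2)^5 + (1/2)^5 := by
    rw [hGdef]
    rw [measure_union (by exact ((((d05.union_left d15).union_left d25).union_left d35).union_left d45)
          : Disjoint (c0 ∪ c1 ∪ c2 ∪ c3 ∪ c4) c5) (measurableSet_cyl _)]
    rw [measure_union ((((d04.union_left d14).union_left d24).union_left d34)
          : Disjoint (c0 ∪ c1 ∪ c2 ∪ c3) c4) (measurableSet_cyl _)]
    rw [measure_union (((d03.union_left d13).union_left d23)
          : Disjoint (c0 ∪ c1 ∪ c2) c3) (measurableSet_cyl _)]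
    rw [measure_union ((d02.union_left d12) : Disjoint (c0 ∪ c1) c2) (measurableSet_cyl _)]
    rw [measure_union d01 (measurableSet_cyl _)]
    rw [hc0, hc1, hc2, hc3, hc4, hc5,
      cyl_measure hμ, cyl_measure hμ, cyl_measure hμ, cyl_measure hμ, cyl_measure hμ,
      cyl_measure hμ]
    norm_num
  -- G minus Bad is contained in the target event
  have hsub2 : G \ Bad ⊆
      {ω : ℕ → Bool | hitTime (true, true, false) ω < hitTime (true, false, false) ω} := by
    rintro ω ⟨hωG, hωB⟩
    obtain ⟨m, hm5, hmf⟩ : ∃ m, 5 ≤ m ∧ ω m = false := by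
      by_contra hc
      push_neg at hc
      exact hωB fun m hm => by simpa using hc m hm
    have hGm : (ω ∈ c0 ∨ ω ∈ c1 ∨ ω ∈ c2 ∨ ω ∈ c3 ∨ ω ∈ c4) ∨ ω ∈ c5 := by
      rw [hGdef] at hωG
      simp only [Set.mem_union] at hωG
      tauto
    show hitTime (true, true, false) ω < hitTime (true, false, false) ω
    rcases hGm with (h | h | h | h | h) | h
    · -- prefix 11, n = 0
      have e0 : ω 0 = true := by simpa using h 0 (by decide)
      have e1 : ω 1 = true := by simpa using h 1 (by decide)
      have hex : ∃ j, ω (0 + 2 + j) = false := by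
        refine ⟨m - 2, ?_⟩
        have e : 0 + 2 + (m - 2) = m := by omega
        rw [e]; exact hmf
      exact main_comb ω 0 (fun k hk => absurd hk (by omega)) e0 e1 hex
    · -- prefix 011, n = 1
      have e1 : ω 1 = true := by simpa using h 1 (by decide)
      have e2 : ω 2 = true := by simpa using h 2 (by decide)
      have hex : ∃ j, ω (1 + 2 + j) = false := by
        refine ⟨m - 3, ?_⟩
        have e : 1 + 2 + (m - 3) = m := by omega
        rw [e]; exact hmf
      exact main_comb ω 1 (fun k hk => absurd hk (by omega)) e1 e2 hex
    · -- prefix 0011, n = 2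
      have e2 : ω 2 = true := by simpa using h 2 (by decide)
      have e3 : ω 3 = true := by simpa using h 3 (by decide)
      have hex : ∃ j, ω (2 + 2 + j) = false := by
        refine ⟨m - 4, ?_⟩
        have e : 2 + 2 + (m - 4) = m := by omega
        rw [e]; exact hmf
      exact main_comb ω 2 (fun k hk => absurd hk (by omega)) e2 e3 hex
    · -- prefix 1011, n = 2
      have e2 : ω 2 = true := by simpa using h 2 (by decide)
      have e3 : ω 3 = true := by simpa using h 3 (by decide)
      have hex : ∃ j, ω (2 + 2 + j) = false := by
        refine ⟨m - 4, ?_⟩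
        have e : 2 + 2 + (m - 4) = m := by omega
        rw [e]; exact hmf
      exact main_comb ω 2 (fun k hk => absurd hk (by omega)) e2 e3 hex
    · -- prefix 00011, n = 3
      have e0 : ω 0 = false := by simpa using h 0 (by decide)
      have e3 : ω 3 = true := by simpa using h 3 (by decide)
      have e4 : ω 4 = true := by simpa using h 4 (by decide)
      have hex : ∃ j, ω (3 + 2 + j) = false := by
        refine ⟨m - 5, ?_⟩
        have e : 3 + 2 + (m - 5) = m := by omega
        rw [e]; exact hmf
      refine main_comb ω 3 ?_ e3 e4 hex
      intro k hk hcon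
      obtain ⟨cc1, -, -⟩ := hcon
      have hk0 : k = 0 := by omega
      rw [hk0, e0] at cc1
      exact Bool.noConfusion cc1
    · -- prefix 01011, n = 3
      have e0 : ω 0 = false := by simpa using h 0 (by decide)
      have e3 : ω 3 = true := by simpa using h 3 (by decide)
      have e4 : ω 4 = true := by simpa using h 4 (by decide)
      have hex : ∃ j, ω (3 + 2 + j) = false := by
        refine ⟨m - 5, ?_⟩
        have e : 3 + 2 + (m - 5) = m := by omega
        rw [e]; exact hmf
      refine main_comb ω 3 ?_ e3 e4 hex
      intro k hk hcon
      obtain ⟨cc1, -, -⟩ := hcon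
      have hk0 : k = 0 := by omega
      rw [hk0, e0] at cc1
      exact Bool.noConfusion cc1
  -- put everything together
  have harith : (1/2 : ENNReal) < (1/2)^2 + (1/2)^3 + (1/2)^4 + (1/2)^4 + (1/2)^5 + (1/2)^5 := by
    have h : ((1/2 : NNReal) : ENNReal) <
        (((1/2)^2 + (1/2)^3 + (1/2)^4 + (1/2)^4 + (1/2)^5 + (1/2)^5 : NNReal) : ENNReal) := by
      rw [ENNReal.coe_lt_coe, ← NNReal.coe_lt_coe]; push_cast; norm_num
    have e : ((1/2 : NNReal) : ENNReal) = 1/2 := by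
      rw [ENNReal.coe_div (by norm_num)]; norm_num
    push_cast at h
    exact h
  calc (1/2 : ENNReal)
      < (1/2)^2 + (1/2)^3 + (1/2)^4 + (1/2)^4 + (1/2)^5 + (1/2)^5 := harith
    _ = μ G := hG.symm
    _ = μ (G \ Bad) := (measure_diff_null hbad).symm
    _ ≤ μ {ω : ℕ → Bool | hitTime (true, true, false) ω < hitTime (true, false, false) ω} :=
        measure_mono hsub2
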